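/- Let $a, a' \in \mathbb{C}^{d_1}$, $b, b' \in \mathbb{C}^{d_2}$, $c, c' \in \mathbb{C}^{d_3}$ and $\tilde a, \tilde a', \tilde b, \tilde b', \tilde c, \tilde c'$ unit vectors in other spaces. Suppose the three pairwise inner products of the product vectors $v_1 = a' \otimes b \otimes c$, $v_2 = a \otimes b' \otimes c$, $v_3 = a \otimes b \otimes c'$ are all nonzero and equal respectively to those of $\tilde v_1 = \tilde a' \otimes \tilde b \otimes \tilde c$, $\tilde v_2 = \tilde a \otimes \tilde b' \otimes \tilde c$, $\tilde v_3 = \tilde a \otimes \tilde b \otimes \tilde c'$, and all inner products are real. Then either $(\langle a, a'\rangle, \langle b, b'\rangle, \langle c, c'\rangle) = (\langle \tilde a, \tilde a'\rangle, \langle \tilde b, \tilde b'\rangle, \langle \tilde c, \tilde c'\rangle)$, or this triple equals the negation $(-\langle \tilde a, \tilde a'\rangle, -\langle \tilde b, \tilde b'\rangle, -\langle \tilde c, \tilde c'\rangle)$. -/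

import Mathlib

/-- Concrete tensor product of three real Euclidean vectors. Its inner product factors
componentwise. -/
noncomputable def tens3 {m n p : ℕ} (a : EuclideanSpace ℝ (Fin m))
    (b : EuclideanSpace ℝ (Fin n)) (c : EuclideanSpace ℝ (Fin p)) :
    EuclideanSpace ℝ (Fin m × Fin n × Fin p) :=
  (WithLp.equiv 2 _).symm (fun q => a q.1 * b q.2.1 * c q.2.2)

lemma sum_comm3 {α β γ M : Type*} [Fintype α] [Fintype β] [Fintype γ]
    [AddCommMonoid M] (f : α → β → γ → M) :
    ∑ x : α, ∑ y : β, ∑ z : γ, f x y z = ∑ z : γ, ∑ y : β, ∑ x : α, f x y z := by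
  rw [Finset.sum_comm]
  refine (Finset.sum_congr rfl fun b _ => Finset.sum_comm).trans ?_
  rw [Finset.sum_comm]

lemma inner_tens3 {m n p : ℕ} (a a' : EuclideanSpace ℝ (Fin m))
    (b b' : EuclideanSpace ℝ (Fin n)) (c c' : EuclideanSpace ℝ (Fin p)) :
    (inner ℝ (tens3 a b c) (tens3 a' b' c') : ℝ) =
      (inner ℝ a a' : ℝ) * (inner ℝ b b' : ℝ) * (inner ℝ c c' : ℝ) := by
  simp only [tens3, PiLp.inner_apply, RCLike.inner_apply, conj_trivial,
    WithLp.equiv_symm_apply, PiLp.toLp_apply, Fintype.sum_prod_type]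
  simp only [Finset.sum_mul, Finset.mul_sum]
  rw [sum_comm3]
  exact Finset.sum_congr rfl fun _ _ => Finset.sum_congr rfl fun _ _ =>
    Finset.sum_congr rfl fun _ _ => by ring

lemma inner_self_of_norm_one {m : ℕ} {x : EuclideanSpace ℝ (Fin m)} (hx : ‖x‖ = 1) :
    (inner ℝ x x : ℝ) = 1 := by
  rw [real_inner_self_eq_norm_sq, hx, one_pow]

/-- Linked-triple lemma: if the three pairwise inner products of
`v₁ = a'⊗b⊗c, v₂ = a⊗b'⊗c, v₃ = a⊗b⊗c'` are nonzero and equal to those of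
`ṽ₁ = ã'⊗b̃⊗c̃, ṽ₂ = ã⊗b̃'⊗c̃, ṽ₃ = ã⊗b̃⊗c̃'`, then the triple
`(⟪a,a'⟫, ⟪b,b'⟫, ⟪c,c'⟫)` equals `(⟪ã,ã'⟫, ⟪b̃,b̃'⟫, ⟪c̃,c̃'⟫)` or its negation. -/
theorem linked_triple_lemma
    {d1 d2 d3 e1 e2 e3 : ℕ}
    (a a' : EuclideanSpace ℝ (Fin d1)) (b b' : EuclideanSpace ℝ (Fin d2))
    (c c' : EuclideanSpace ℝ (Fin d3))
    (ta ta' : EuclideanSpace ℝ (Fin e1)) (tb tb' : EuclideanSpace ℝ (Fin e2))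
    (tc tc' : EuclideanSpace ℝ (Fin e3))
    (ha : ‖a‖ = 1) (ha' : ‖a'‖ = 1) (hb : ‖b‖ = 1) (hb' : ‖b'‖ = 1)
    (hc : ‖c‖ = 1) (hc' : ‖c'‖ = 1)
    (hta : ‖ta‖ = 1) (hta' : ‖ta'‖ = 1) (htb : ‖tb‖ = 1) (htb' : ‖tb'‖ = 1)
    (htc : ‖tc‖ = 1) (htc' : ‖tc'‖ = 1)
    (h12ne : (inner ℝ (tens3 a' b c) (tens3 a b' c) : ℝ) ≠ 0)
    (h13ne : (inner ℝ (tens3 a' b c) (tens3 a b c') : ℝ) ≠ 0)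
    (h23ne : (inner ℝ (tens3 a b' c) (tens3 a b c') : ℝ) ≠ 0)
    (h12 : (inner ℝ (tens3 a' b c) (tens3 a b' c) : ℝ) =
      inner ℝ (tens3 ta' tb tc) (tens3 ta tb' tc))
    (h13 : (inner ℝ (tens3 a' b c) (tens3 a b c') : ℝ) =
      inner ℝ (tens3 ta' tb tc) (tens3 ta tb tc'))
    (h23 : (inner ℝ (tens3 a b' c) (tens3 a b c') : ℝ) =
      inner ℝ (tens3 ta tb' tc) (tens3 ta tb tc')) :
    ((inner ℝ a a' : ℝ), (inner ℝ b b' : ℝ), (inner ℝ c c' : ℝ)) =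
      ((inner ℝ ta ta' : ℝ), (inner ℝ tb tb' : ℝ), (inner ℝ tc tc' : ℝ)) ∨
    ((inner ℝ a a' : ℝ), (inner ℝ b b' : ℝ), (inner ℝ c c' : ℝ)) =
      (-(inner ℝ ta ta' : ℝ), -(inner ℝ tb tb' : ℝ), -(inner ℝ tc tc' : ℝ)) := by
  simp only [inner_tens3, inner_self_of_norm_one ha, inner_self_of_norm_one hb,
    inner_self_of_norm_one hc, inner_self_of_norm_one hta, inner_self_of_norm_one htb,
    inner_self_of_norm_one htc, mul_one, one_mul] at h12 h13 h23 h12ne h13ne h23ne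
  rw [real_inner_comm a a', real_inner_comm ta ta'] at h12
  rw [real_inner_comm a a'] at h12ne
  rw [real_inner_comm a a', real_inner_comm ta ta'] at h13
  rw [real_inner_comm a a'] at h13ne
  rw [real_inner_comm b b', real_inner_comm tb tb'] at h23
  rw [real_inner_comm b b'] at h23ne
  set α : ℝ := (inner ℝ a a' : ℝ) with hαdef
  set β : ℝ := (inner ℝ b b' : ℝ) with hβdef
  set γ : ℝ := (inner ℝ c c' : ℝ) with hγdef
  set tα : ℝ := (inner ℝ ta ta' : ℝ) with htαdef
  set tβ : ℝ := (inner ℝ tb tb' : ℝ) with htβdef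
  set tγ : ℝ := (inner ℝ tc tc' : ℝ) with htγdef
  -- h12 : α * β = tα * tβ, h13 : α * γ = tα * tγ, h23 : β * γ = tβ * tγ
  have hα : α ≠ 0 := fun h => h12ne (by rw [h, zero_mul])
  have hβ : β ≠ 0 := fun h => h12ne (by rw [h, mul_zero])
  have hγ : γ ≠ 0 := fun h => h13ne (by rw [h, mul_zero])
  have htα : tα ≠ 0 := fun h => h12ne (h12.trans (by rw [h, zero_mul]))
  have hβγ : β * γ ≠ 0 := mul_ne_zero hβ hγ
  have hsq : α * α = tα * tα := by
    have h1 : (α * α) * (β * γ) = (tα * tα) * (β * γ) :=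
      calc (α * α) * (β * γ) = (α * β) * (α * γ) := by ring
        _ = (tα * tβ) * (tα * tγ) := by rw [h12, h13]
        _ = (tα * tα) * (tβ * tγ) := by ring
        _ = (tα * tα) * (β * γ) := by rw [h23]
    exact mul_right_cancel₀ hβγ h1
  rcases mul_self_eq_mul_self_iff.mp hsq with h | h
  · left
    have hβ' : β = tβ := by
      apply mul_left_cancel₀ hα
      rw [h12, h]
    have hγ' : γ = tγ := by
      apply mul_left_cancel₀ hα
      rw [h13, h]
    rw [h, hβ', hγ']
  · right
    have hβ' : β = -tβ := by
      apply mul_left_cancel₀ hα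
      rw [h12, h]; ring
    have hγ' : γ = -tγ := by
      apply mul_left_cancel₀ hα
      rw [h13, h]; ring
    rw [h, hβ', hγ']
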